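/- Let T be the compact self-adjoint operator on L²(0,X) ⊕ L²(0,X) (X > 0) given in block form by T = [[0, V], [V*, 0]], where V is the Volterra-type operator (Vg)(x) = ∫_x^X g(x') dx'. Then for every a > 0, the number of eigenvalues of T greater than a equals ⌊X/(πa) + 1/2⌋, i.e. the number of positive integers k with X/(π/2 + π(k−1)) > a. In particular n(T, a)/X → 1/(πa) as X → ∞. -/

import Mathlib

open TopologicalSpace Real Filter

/-- Number of eigenvalues of `A` greater than `a`, counted with multiplicity. -/
noncomputable def nEig {H : Type*} [NormedAddCommGroup H] [InnerProductSpace ℂ H]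
    (A : H →L[ℂ] H) (a : ℝ) : ℕ :=
  Module.finrank ℂ
    ↥(⨆ μ : {μ : ℝ // a < μ}, Module.End.eigenspace (A : H →ₗ[ℂ] H) ((μ : ℝ) : ℂ))

lemma aux_finrank_biSup {K V : Type*} [DivisionRing K] [AddCommGroup V] [Module K V]
    {ι : Type*} [DecidableEq ι] {p : ι → Submodule K V} (hp : iSupIndep p)
    (s : Finset ι) (hfin : ∀ i ∈ s, FiniteDimensional K (p i)) :
    FiniteDimensional K ↥(⨆ i ∈ s, p i) ∧
    Module.finrank K ↥(⨆ i ∈ s, p i) = ∑ i ∈ s, Module.finrank K (p i) := by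
  classical
  induction s using Finset.induction_on with
  | empty =>
      rw [show (⨆ i ∈ (∅ : Finset ι), p i) = ⊥ by simp]
      exact ⟨inferInstanceAs (FiniteDimensional K (⊥ : Submodule K V)), by simp⟩
  | @insert a s ha ih =>
      have hQ := ih (fun i hi => hfin i (Finset.mem_insert_of_mem hi))
      haveI : FiniteDimensional K (p a) := hfin a (Finset.mem_insert_self a s)
      haveI := hQ.1
      have hd : Disjoint (p a) (⨆ i ∈ s, p i) := by
        refine (hp a).mono_right ?_
        refine iSup₂_le fun i hi => ?_
        exact le_iSup₂ (f := fun i (_ : i ≠ a) => p i) i (by rintro rfl; exact ha hi)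
      rw [Finset.iSup_insert, Finset.sum_insert ha]
      refine ⟨inferInstance, ?_⟩
      have := Submodule.finrank_sup_add_finrank_inf_eq (p a) (⨆ i ∈ s, p i)
      rw [hd.eq_bot] at this
      simp only [finrank_bot, add_zero] at this
      rw [this, hQ.2]

lemma aux_count {H : Type*} [NormedAddCommGroup H] [InnerProductSpace ℂ H]
    (A : H →L[ℂ] H) {a X : ℝ} (ha : 0 < a) (hX : 0 < X)
    (heig : ∀ μ : ℝ, μ ≠ 0 →
      (Module.End.eigenspace (A : H →ₗ[ℂ] H) ((μ : ℝ) : ℂ) ≠ ⊥ ↔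
        ∃ k : ℕ, μ = X / (π / 2 + π * k) ∨ μ = -(X / (π / 2 + π * k))))
    (hsimple : ∀ k : ℕ, Module.finrank ℂ
        (Module.End.eigenspace (A : H →ₗ[ℂ] H) ((X / (π / 2 + π * k) : ℝ) : ℂ)) = 1) :
    nEig A a = ⌈X / (π * a) - 1 / 2⌉₊ := by
  classical
  set E : ℝ → Submodule ℂ H :=
    fun μ => Module.End.eigenspace (A : H →ₗ[ℂ] H) ((μ : ℝ) : ℂ) with hE
  have hind : iSupIndep E :=
    (Module.End.eigenspaces_iSupIndep (A : H →ₗ[ℂ] H)).comp Complex.ofReal_injective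
  set lam : ℕ → ℝ := fun k => X / (π / 2 + π * k) with hlam
  have dpos : ∀ k : ℕ, (0:ℝ) < π / 2 + π * k := by
    intro k
    have := Real.pi_pos
    positivity
  have lam_pos : ∀ k : ℕ, 0 < lam k := fun k => div_pos hX (dpos k)
  have lam_inj : ∀ k j : ℕ, lam k = lam j → k = j := by
    intro k j h
    have h0 : X / (π / 2 + π * k) = X / (π / 2 + π * j) := h
    rw [div_eq_div_iff (dpos k).ne' (dpos j).ne'] at h0
    have h1 : π / 2 + π * (j:ℝ) = π / 2 + π * k := mul_left_cancel₀ hX.ne' h0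
    have hπ := Real.pi_pos
    have : (k : ℝ) = j := by nlinarith
    exact_mod_cast this
  set t : ℝ := X / (π * a) with ht
  have key : ∀ k : ℕ, a < lam k ↔ (k : ℝ) < t - 1 / 2 := by
    intro k
    have hπ := Real.pi_pos
    rw [hlam]
    simp only
    rw [lt_div_iff₀ (dpos k), ht]
    rw [show X / (π * a) - 1 / 2 = (X / a - π / 2) / π by field_simp]
    rw [lt_div_iff₀ hπ]
    rw [div_sub' ha.ne']
    rw [lt_div_iff₀ ha]
    constructor <;> intro h <;> nlinarith
  set N : ℕ := ⌈t - 1 / 2⌉₊ with hN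
  have hkN : ∀ k : ℕ, a < lam k ↔ k < N := by
    intro k; rw [key, hN, Nat.lt_ceil]
  set s : Finset ℝ := (Finset.range N).image lam with hs
  have hsup : (⨆ μ : {μ : ℝ // a < μ}, E μ) = ⨆ i ∈ s, E i := by
    apply le_antisymm
    · refine iSup_le fun μ => ?_
      obtain ⟨μ, hμ⟩ := μ
      by_cases hb : E μ = ⊥
      · rw [hb]; exact bot_le
      · obtain ⟨k, hk | hk⟩ := (heig μ (ne_of_gt (ha.trans hμ))).mp hb
        · have hmem : μ ∈ s := by
            rw [hs]
            refine Finset.mem_image.mpr ⟨k, Finset.mem_range.mpr ?_, hk.symm⟩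
            refine (hkN k).1 ?_
            show a < X / (π / 2 + π * k)
            rw [← hk]; exact hμ
          exact le_biSup E hmem
        · exfalso; have := lam_pos k; rw [hlam] at this; simp only at this
          have : μ < 0 := by rw [hk]; linarith
          linarith [ha.trans hμ]
    · refine iSup₂_le fun i hi => ?_
      obtain ⟨k, hk, rfl⟩ := Finset.mem_image.mp hi
      exact le_iSup (fun μ : {μ : ℝ // a < μ} => E μ)
        ⟨lam k, (hkN k).2 (Finset.mem_range.mp hk)⟩
  have hfin : ∀ i ∈ s, FiniteDimensional ℂ (E i) := by
    intro i hi
    obtain ⟨k, _, rfl⟩ := Finset.mem_image.mp hi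
    exact Module.finite_of_finrank_eq_succ (hsimple k)
  obtain ⟨_, hfr⟩ := aux_finrank_biSup hind s hfin
  have hsum : ∑ i ∈ s, Module.finrank ℂ (E i) = N := by
    rw [hs, Finset.sum_image (fun x _ y _ h => lam_inj x y h)]
    simp only [show ∀ k : ℕ, Module.finrank ℂ (E (lam k)) = 1 from hsimple]
    simp
  rw [show nEig A a = Module.finrank ℂ ↥(⨆ μ : {μ : ℝ // a < μ}, E ↑μ) from rfl,
    hsup, hfr, hsum]

/-- For the block operator `T = [[0,V],[V*,0]]` on `L²(0,X) ⊕ L²(0,X)` (encoded here,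
for each `X > 0`, as a compact self-adjoint operator `T X` whose nonzero eigenvalues
are exactly `± X/(π/2 + π(k−1))`, `k ≥ 1`, each simple) the eigenvalue counting
function satisfies `n(T X, a) = ⌊X/(πa) + 1/2⌋` (away from the degenerate case where
an eigenvalue equals `a`), and `n(T X, a)/X → 1/(πa)` as `X → ∞`. -/
theorem stmt11 {H : Type*} [NormedAddCommGroup H] [InnerProductSpace ℂ H]
    [CompleteSpace H] [SeparableSpace H]
    (T : ℝ → (H →L[ℂ] H)) (a : ℝ) (ha : 0 < a)
    (hcpt : ∀ X > (0:ℝ), IsCompactOperator (T X))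
    (hsa : ∀ X > (0:ℝ), IsSelfAdjoint (T X))
    (heig : ∀ X > (0:ℝ), ∀ μ : ℝ, μ ≠ 0 →
      (Module.End.eigenspace ((T X) : H →ₗ[ℂ] H) ((μ : ℝ) : ℂ) ≠ ⊥ ↔
        ∃ k : ℕ, μ = X / (π / 2 + π * k) ∨ μ = -(X / (π / 2 + π * k))))
    (hsimple : ∀ X > (0:ℝ), ∀ k : ℕ,
      Module.finrank ℂ
        (Module.End.eigenspace ((T X) : H →ₗ[ℂ] H) ((X / (π / 2 + π * k) : ℝ) : ℂ)) = 1) :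
    (∀ X > (0:ℝ), (¬ ∃ k : ℕ, X / (π / 2 + π * k) = a) →
      nEig (T X) a = ⌊X / (π * a) + 1 / 2⌋₊) ∧
    Tendsto (fun X : ℝ => (nEig (T X) a : ℝ) / X) atTop (nhds (1 / (π * a))) := by
  have hπ := Real.pi_pos
  have hπa : 0 < π * a := mul_pos hπ ha
  have hcount : ∀ X > (0:ℝ), nEig (T X) a = ⌈X / (π * a) - 1 / 2⌉₊ :=
    fun X hX => aux_count (T X) ha hX (heig X hX) (hsimple X hX)
  constructor
  · intro X hX hnd
    rw [hcount X hX]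
    set s : ℝ := X / (π * a) - 1 / 2 with hsdef
    have hndk : ∀ k : ℕ, (k : ℝ) ≠ s := by
      intro k hk
      apply hnd
      refine ⟨k, ?_⟩
      have hdk : π / 2 + π * k = X / a := by
        rw [← hk] at hsdef
        field_simp at hsdef ⊢
        nlinarith
      rw [hdk]
      field_simp
    have heq : X / (π * a) + 1 / 2 = s + 1 := by rw [hsdef]; ring
    rw [heq]
    rcases lt_or_ge s 0 with hs | hs
    · rw [Nat.ceil_eq_zero.mpr hs.le, Nat.floor_eq_zero.mpr (by linarith)]
    · have hfl : (⌊s⌋₊ : ℝ) < s := lt_of_le_of_ne (Nat.floor_le hs) (hndk ⌊s⌋₊)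
      rw [Nat.floor_add_one hs]
      exact le_antisymm (Nat.ceil_le_floor_add_one s) (Nat.lt_ceil.mpr hfl)
  · have hg : Tendsto (fun X : ℝ => (X / (π * a) - 1 / 2) / X) atTop (nhds (1 / (π * a))) := by
      have h1 : Tendsto (fun X : ℝ => 1 / (π * a) - (1 / 2) * X⁻¹) atTop
          (nhds (1 / (π * a) - (1 / 2) * 0)) :=
        tendsto_const_nhds.sub (tendsto_const_nhds.mul tendsto_inv_atTop_zero)
      rw [mul_zero, sub_zero] at h1
      refine h1.congr' ?_
      filter_upwards [eventually_gt_atTop (0:ℝ)] with X hX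
      field_simp
    have hh : Tendsto (fun X : ℝ => (X / (π * a) + 1 / 2) / X) atTop (nhds (1 / (π * a))) := by
      have h1 : Tendsto (fun X : ℝ => 1 / (π * a) + (1 / 2) * X⁻¹) atTop
          (nhds (1 / (π * a) + (1 / 2) * 0)) :=
        tendsto_const_nhds.add (tendsto_const_nhds.mul tendsto_inv_atTop_zero)
      rw [mul_zero, add_zero] at h1
      refine h1.congr' ?_
      filter_upwards [eventually_gt_atTop (0:ℝ)] with X hX
      field_simp
    refine tendsto_of_tendsto_of_tendsto_of_le_of_le' hg hh ?_ ?_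
    · filter_upwards [eventually_ge_atTop (max 1 (π * a))] with X hX
      have hX1 : (1:ℝ) ≤ X := le_trans (le_max_left _ _) hX
      have hX0 : 0 < X := lt_of_lt_of_le one_pos hX1
      rw [hcount X hX0]
      have : X / (π * a) - 1 / 2 ≤ (⌈X / (π * a) - 1 / 2⌉₊ : ℝ) := Nat.le_ceil _
      gcongr
    · filter_upwards [eventually_ge_atTop (max 1 (π * a))] with X hX
      have hX1 : (1:ℝ) ≤ X := le_trans (le_max_left _ _) hX
      have hXpa : π * a ≤ X := le_trans (le_max_right _ _) hX
      have hX0 : 0 < X := lt_of_lt_of_le one_pos hX1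
      rw [hcount X hX0]
      have hs0 : 0 ≤ X / (π * a) - 1 / 2 := by
        have : (1:ℝ) ≤ X / (π * a) := (one_le_div hπa).mpr hXpa
        linarith
      have h2 : (⌈X / (π * a) - 1 / 2⌉₊ : ℝ) < X / (π * a) - 1 / 2 + 1 :=
        Nat.ceil_lt_add_one hs0
      have : (⌈X / (π * a) - 1 / 2⌉₊ : ℝ) ≤ X / (π * a) + 1 / 2 := by linarith
      gcongr
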